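/- The degree-3 component of the ideal generated by ω, namely ⟨⟨ω⟩⟩ ∩ 𝔏₃, is exactly the image [ω,H] of the map H → 𝔏₃ given by h ↦ [ω,h], and this map h ↦ [ω,h] is injective. -/

import Mathlib

open scoped TensorProduct

noncomputable section

/-- The free Lie ring `𝔏` on the `2g` generators. -/
abbrev L (g : ℕ) : Type := FreeLieAlgebra ℤ (Fin (2 * g))

/-- The free abelian group `H` of rank `2g`. -/
abbrev H (g : ℕ) : Type := Fin (2 * g) → ℤ

/-- The canonical inclusion of `H` into `𝔏` as the degree `1` part. -/
def toL (g : ℕ) : H g →ₗ[ℤ] L g where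
  toFun v := ∑ i, v i • FreeLieAlgebra.of ℤ i
  map_add' x y := by simp [add_smul, Finset.sum_add_distrib]
  map_smul' c x := by simp [Finset.smul_sum, smul_smul]

/-- Index of the basis element `aᵢ`. -/
def aIdx (g : ℕ) (i : Fin g) : Fin (2 * g) := ⟨i.1, by have := i.2; omega⟩

/-- Index of the basis element `bᵢ`. -/
def bIdx (g : ℕ) (i : Fin g) : Fin (2 * g) := ⟨g + i.1, by have := i.2; omega⟩

/-- The basis element `aᵢ` of `H`. -/
def aV (g : ℕ) (i : Fin g) : H g := Pi.single (aIdx g i) 1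

/-- The basis element `bᵢ` of `H`. -/
def bV (g : ℕ) (i : Fin g) : H g := Pi.single (bIdx g i) 1

/-- The symplectic pairing `ω : H × H → ℤ`, with `ω(aᵢ,bⱼ) = δᵢⱼ`, `ω(aᵢ,aⱼ) = ω(bᵢ,bⱼ) = 0`. -/
def omegaPair (g : ℕ) (x y : H g) : ℤ :=
  ∑ i : Fin g, (x (aIdx g i) * y (bIdx g i) - x (bIdx g i) * y (aIdx g i))

/-- `IsBrkt g k x` means that `x` is a `k`-fold Lie bracket of elements of `H`. -/
inductive IsBrkt (g : ℕ) : ℕ → L g → Prop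
  | of (v : H g) : IsBrkt g 1 (toL g v)
  | lie {m n : ℕ} {x y : L g} : IsBrkt g m x → IsBrkt g n y → IsBrkt g (m + n) ⁅x, y⁆

/-- `𝔏ₖ`, the degree-`k` homogeneous component of the free Lie ring:
the `ℤ`-span of all `k`-fold Lie brackets of elements of `H`. -/
def homog (g k : ℕ) : Submodule ℤ (L g) := Submodule.span ℤ {x | IsBrkt g k x}

lemma toL_mem (g : ℕ) (v : H g) : toL g v ∈ homog g 1 :=
  Submodule.subset_span (IsBrkt.of v)

lemma lie_mem_homog {g m n : ℕ} {x y : L g} (hx : x ∈ homog g m) (hy : y ∈ homog g n) :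
    ⁅x, y⁆ ∈ homog g (m + n) := by
  induction hx using Submodule.span_induction with
  | mem a ha =>
    induction hy using Submodule.span_induction with
    | mem b hb => exact Submodule.subset_span (ha.lie hb)
    | zero => simp
    | add b c hb hc ihb ihc => rw [lie_add]; exact Submodule.add_mem _ ihb ihc
    | smul t b hb ihb => rw [lie_smul]; exact Submodule.smul_mem _ t ihb
  | zero => simp
  | add a c ha hc iha ihc => rw [add_lie]; exact Submodule.add_mem _ iha ihc
  | smul t a ha iha => rw [smul_lie]; exact Submodule.smul_mem _ t iha

/-- `[[a,b],c]` as an element of `𝔏₃`. -/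
def trip (g : ℕ) (a b c : H g) : ↥(homog g 3) :=
  ⟨⁅⁅toL g a, toL g b⁆, toL g c⁆,
    Submodule.subset_span (((IsBrkt.of a).lie (IsBrkt.of b)).lie (IsBrkt.of c))⟩

/-- The symplectic element `ω = Σᵢ [aᵢ, bᵢ] ∈ 𝔏₂`. -/
def omegaL (g : ℕ) : L g := ∑ i : Fin g, ⁅toL g (aV g i), toL g (bV g i)⁆

lemma omegaL_mem (g : ℕ) : omegaL g ∈ homog g 2 :=
  Submodule.sum_mem _ fun i _ =>
    Submodule.subset_span ((IsBrkt.of (aV g i)).lie (IsBrkt.of (bV g i)))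

/-- The Lie ideal `⟨⟨ω⟩⟩` of `𝔏` generated by `ω`. -/
def omegaIdeal (g : ℕ) : LieIdeal ℤ (L g) := LieSubmodule.lieSpan ℤ (L g) {omegaL g}

end

noncomputable section
namespace S6

variable {g : ℕ}

abbrev AA (g : ℕ) := MonoidAlgebra ℤ (FreeMonoid (Fin (2*g)))

instance : LieRing (AA g) := LieRing.ofAssociativeRing

instance : DecidableEq (FreeMonoid (Fin (2*g))) :=
  fun a b => decidable_of_iff (a.toList = b.toList) FreeMonoid.toList.injective.eq_iff

def phiL (g : ℕ) : L g →ₗ⁅ℤ⁆ AA g :=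
  FreeLieAlgebra.lift ℤ fun i => MonoidAlgebra.single (FreeMonoid.of i) 1

lemma phi_of (i : Fin (2*g)) :
    phiL g (FreeLieAlgebra.of ℤ i) = MonoidAlgebra.single (FreeMonoid.of i) 1 := by
  exact FreeLieAlgebra.lift_of_apply (R := ℤ) _ i

lemma phi_lie (x y : L g) : phiL g ⁅x,y⁆ = phiL g x * phiL g y - phiL g y * phiL g x := by
  rw [LieHom.map_lie, Ring.lie_def]

/-- left-normed triple bracket of generators -/
def ttt (p q r : Fin (2*g)) : L g :=
  ⁅⁅FreeLieAlgebra.of ℤ p, FreeLieAlgebra.of ℤ q⁆, FreeLieAlgebra.of ℤ r⁆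

def wrd (p q r : Fin (2*g)) : FreeMonoid (Fin (2*g)) := FreeMonoid.ofList [p,q,r]

lemma of_mul_of_mul_of (p q r : Fin (2*g)) :
    FreeMonoid.of p * FreeMonoid.of q * FreeMonoid.of r = wrd p q r := rfl

lemma of_mul_of_mul_of' (p q r : Fin (2*g)) :
    FreeMonoid.of p * (FreeMonoid.of q * FreeMonoid.of r) = wrd p q r := rfl

lemma phi_ttt (p q r : Fin (2*g)) : phiL g (ttt p q r) =
    MonoidAlgebra.single (wrd p q r) 1 - MonoidAlgebra.single (wrd q p r) 1
    - MonoidAlgebra.single (wrd r p q) 1 + MonoidAlgebra.single (wrd r q p) 1 := by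
  simp only [ttt, phi_lie, phi_of, sub_mul, mul_sub, MonoidAlgebra.single_mul_single,
    one_mul, of_mul_of_mul_of]
  ring_nf
  rw [of_mul_of_mul_of', of_mul_of_mul_of']
  abel

lemma ttt_self (p r : Fin (2*g)) : ttt p p r = 0 := by simp [ttt]

lemma ttt_swap (p q r : Fin (2*g)) : ttt q p r = - ttt p q r := by
  rw [ttt, ttt, ← lie_skew (FreeLieAlgebra.of ℤ p), neg_lie, neg_neg]

lemma ttt_jacobi (p q r : Fin (2*g)) : ttt p q r = ttt p r q - ttt q r p := by
  rw [ttt, lie_lie]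
  rw [show ⁅FreeLieAlgebra.of ℤ p, ⁅FreeLieAlgebra.of ℤ q, FreeLieAlgebra.of ℤ r⁆⁆
      = - ttt q r p by rw [← lie_skew]; rfl]
  rw [show ⁅FreeLieAlgebra.of ℤ q, ⁅FreeLieAlgebra.of ℤ p, FreeLieAlgebra.of ℤ r⁆⁆
      = - ttt p r q by rw [← lie_skew]; rfl]
  abel

def bfun (g : ℕ) (w : FreeMonoid (Fin (2*g))) : L g :=
  match FreeMonoid.toList w with
  | [x,y,z] => if x < y ∧ x < z then -(ttt y x z) else if y < x ∧ y = z then ttt x y z else 0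
  | _ => 0

lemma bfun_wrd (p q r : Fin (2*g)) : bfun g (wrd p q r) =
    if p < q ∧ p < r then -(ttt q p r) else if q < p ∧ q = r then ttt p q r else 0 := rfl

lemma bfun_len {w : FreeMonoid (Fin (2*g))} (h : w.length ≠ 3) : bfun g w = 0 := by
  unfold bfun
  have : w.toList.length ≠ 3 := h
  match hw : w.toList with
  | [x,y,z] => rw [hw] at this; simp at this
  | [] => rfl
  | [_] => rfl
  | [_,_] => rfl
  | _::_::_::_::_ => rfl

def sigmaA (g : ℕ) : AA g →ₗ[ℤ] L g :=
  (Finsupp.linearCombination ℤ (bfun g)).comp (MonoidAlgebra.coeffLinearEquiv ℤ).toLinearMap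

lemma sigma_single (w : FreeMonoid (Fin (2*g))) (c : ℤ) :
    sigmaA g (MonoidAlgebra.single w c) = c • bfun g w :=
  Finsupp.linearCombination_single ℤ c w

def sigmaL (g : ℕ) : L g →ₗ[ℤ] L g := (sigmaA g).comp (phiL g).toLinearMap

lemma sigmaL_ttt (p q r : Fin (2*g)) : sigmaL g (ttt p q r) = ttt p q r := by
  have key : ∀ p q r : Fin (2*g), q < p → sigmaL g (ttt p q r) = ttt p q r := by
    intro p q r hqp
    rw [sigmaL, LinearMap.comp_apply, LieHom.coe_toLinearMap, phi_ttt,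
      map_add, map_sub, map_sub, sigma_single, sigma_single, sigma_single, sigma_single]
    simp only [one_smul, bfun_wrd]
    rcases lt_trichotomy r q with h | h | h
    · rw [if_neg (fun hc : _ ∧ _ => absurd hqp (asymm hc.1)),
        if_neg (fun hc : _ ∧ _ => absurd hc.2 h.ne'),
        if_neg (fun hc : _ ∧ _ => absurd hc.2 (asymm h)),
        if_neg (fun hc : _ ∧ _ => absurd hqp (asymm hc.1)),
        if_pos ⟨h.trans hqp, h⟩, if_pos ⟨h, h.trans hqp⟩, ttt_jacobi p q r]
      abel
    · subst h
      rw [if_neg (fun hc : _ ∧ _ => absurd hqp (asymm hc.1)), if_pos ⟨hqp, rfl⟩,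
        if_neg (fun hc : _ ∧ _ => absurd hc.2 (lt_irrefl r)),
        if_neg (fun hc : _ ∧ _ => absurd hqp (asymm hc.1)),
        if_neg (fun hc : _ ∧ _ => absurd hc.1 (lt_irrefl r)),
        if_neg (fun hc : _ ∧ _ => absurd hc.1 (lt_irrefl r))]
      abel
    · rw [if_neg (fun hc : _ ∧ _ => absurd hqp (asymm hc.1)),
        if_neg (fun hc : _ ∧ _ => absurd hc.2 h.ne),
        if_pos ⟨hqp, h⟩,
        if_neg (fun hc : _ ∧ _ => absurd hc.2 (asymm h)),
        if_neg (fun hc : _ ∧ _ => absurd hc.2 hqp.ne'),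
        if_neg (fun hc : _ ∧ _ => absurd hc.1 (asymm h)),
        if_neg (fun hc : _ ∧ _ => absurd hc.2 hqp.ne)]
      abel
  rcases lt_trichotomy p q with h | h | h
  · rw [ttt_swap q p r, map_neg, key q p r h]
  · subst h; rw [ttt_self, map_zero]
  · exact key p q r h
lemma toL_apply (v : H g) : toL g v = ∑ i, v i • FreeLieAlgebra.of ℤ i := rfl

lemma sum_lie'' {ι : Type*} (s : Finset ι) (f : ι → L g) (y : L g) :
    ⁅∑ i ∈ s, f i, y⁆ = ∑ i ∈ s, ⁅f i, y⁆ := by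
  induction s using Finset.cons_induction with
  | empty => simp
  | cons i s hi ih => simp [Finset.sum_cons, add_lie, ih]

lemma lie_sum'' {ι : Type*} (y : L g) (s : Finset ι) (f : ι → L g) :
    ⁅y, ∑ i ∈ s, f i⁆ = ∑ i ∈ s, ⁅y, f i⁆ :=
  map_sum (LieAlgebra.ad ℤ (L g) y) f s

lemma triple_expand (a b c : H g) :
    ⁅⁅toL g a, toL g b⁆, toL g c⁆
      = ∑ p, ∑ q, ∑ r, (c p * (b q * a r)) • ttt r q p := by
  rw [toL_apply, toL_apply, toL_apply]
  simp only [sum_lie'', lie_sum'', smul_lie, lie_smul, Finset.smul_sum, smul_smul, ttt]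

lemma sigmaL_triple (a b c : H g) :
    sigmaL g ⁅⁅toL g a, toL g b⁆, toL g c⁆ = ⁅⁅toL g a, toL g b⁆, toL g c⁆ := by
  rw [triple_expand]
  simp only [map_sum, map_smul, sigmaL_ttt]
lemma isBrkt_pos {k : ℕ} {x : L g} (h : IsBrkt g k x) : 1 ≤ k := by
  induction h with
  | of v => exact le_refl 1
  | lie hm hn ihm ihn => omega

lemma isBrkt_one' {k : ℕ} {x : L g} (h : IsBrkt g k x) (hk : k = 1) : ∃ v, x = toL g v := by
  cases h with
  | of v => exact ⟨v, rfl⟩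
  | @lie m n y z hm hn =>
    have h1 := isBrkt_pos hm; have h2 := isBrkt_pos hn; omega

lemma isBrkt_one {x : L g} (h : IsBrkt g 1 x) : ∃ v, x = toL g v := isBrkt_one' h rfl

lemma isBrkt_two' {k : ℕ} {x : L g} (h : IsBrkt g k x) (hk : k = 2) :
    ∃ a b, x = ⁅toL g a, toL g b⁆ := by
  cases h with
  | of v => omega
  | @lie m n y z hm hn =>
    have hm1 := isBrkt_pos hm
    have hn1 := isBrkt_pos hn
    obtain ⟨a, rfl⟩ := isBrkt_one' hm (by omega)
    obtain ⟨b, rfl⟩ := isBrkt_one' hn (by omega)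
    exact ⟨a, b, rfl⟩

lemma isBrkt_two {x : L g} (h : IsBrkt g 2 x) : ∃ a b, x = ⁅toL g a, toL g b⁆ := isBrkt_two' h rfl

lemma isBrkt_three {x : L g} (h : IsBrkt g 3 x) :
    (∃ a b c, x = ⁅⁅toL g a, toL g b⁆, toL g c⁆) ∨
    (∃ a b c, x = ⁅toL g a, ⁅toL g b, toL g c⁆⁆) := by
  generalize hk : (3 : ℕ) = k at h
  cases h with
  | of v => omega
  | @lie m n y z hm hn =>
    have hm1 := isBrkt_pos hm
    have hn1 := isBrkt_pos hn
    rcases (by omega : (m = 1 ∧ n = 2) ∨ (m = 2 ∧ n = 1)) with ⟨hm', hn'⟩ | ⟨hm', hn'⟩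
    · obtain ⟨a, rfl⟩ := isBrkt_one' hm hm'
      obtain ⟨b, c, rfl⟩ := isBrkt_two' hn hn'
      exact Or.inr ⟨a, b, c, rfl⟩
    · obtain ⟨a, b, rfl⟩ := isBrkt_two' hm hm'
      obtain ⟨c, rfl⟩ := isBrkt_one' hn hn'
      exact Or.inl ⟨a, b, c, rfl⟩

lemma sigmaL_homog3 {x : L g} (hx : x ∈ homog g 3) : sigmaL g x = x := by
  induction hx using Submodule.span_induction with
  | mem a ha =>
    rcases isBrkt_three ha with ⟨a, b, c, rfl⟩ | ⟨a, b, c, rfl⟩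
    · exact sigmaL_triple a b c
    · rw [← lie_skew, map_neg, sigmaL_triple]
  | zero => simp
  | add a b ha hb iha ihb => rw [map_add, iha, ihb]
  | smul t a ha iha => rw [map_smul, iha]

def WL (g k : ℕ) : Submodule ℤ (AA g) :=
  Submodule.span ℤ {a | ∃ w : FreeMonoid (Fin (2*g)), w.length = k ∧ a = MonoidAlgebra.single w 1}

lemma WL_mul {m n : ℕ} {a b : AA g} (ha : a ∈ WL g m) (hb : b ∈ WL g n) :
    a * b ∈ WL g (m + n) := by
  induction ha using Submodule.span_induction with
  | mem a ha =>
    induction hb using Submodule.span_induction with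
    | mem b hb =>
      obtain ⟨w, hw, rfl⟩ := ha
      obtain ⟨u, hu, rfl⟩ := hb
      rw [MonoidAlgebra.single_mul_single, one_mul]
      exact Submodule.subset_span ⟨w * u, by rw [FreeMonoid.length_mul, hw, hu], rfl⟩
    | zero => rw [mul_zero]; exact zero_mem _
    | add b c hb hc ihb ihc => rw [mul_add]; exact add_mem ihb ihc
    | smul t b hb ihb => rw [mul_smul_comm]; exact Submodule.smul_mem _ t ihb
  | zero => rw [zero_mul]; exact zero_mem _
  | add a c ha hc iha ihc => rw [add_mul]; exact add_mem iha ihc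
  | smul t a ha iha => rw [smul_mul_assoc]; exact Submodule.smul_mem _ t iha

lemma phi_toL (v : H g) :
    phiL g (toL g v) = ∑ i, v i • MonoidAlgebra.single (FreeMonoid.of i) 1 := by
  rw [toL_apply]
  rw [show (phiL g) (∑ i, v i • FreeLieAlgebra.of ℤ i)
      = ∑ i, (phiL g) (v i • FreeLieAlgebra.of ℤ i) from map_sum (phiL g).toLinearMap _ _]
  simp only [map_smul, phi_of]

lemma phi_isBrkt {k : ℕ} {x : L g} (h : IsBrkt g k x) : phiL g x ∈ WL g k := by
  induction h with
  | of v =>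
    rw [phi_toL]
    exact Submodule.sum_mem _ fun i _ => Submodule.smul_mem _ _
      (Submodule.subset_span ⟨FreeMonoid.of i, FreeMonoid.length_of i, rfl⟩)
  | @lie m n y z hm hn ihm ihn =>
    rw [phi_lie]
    exact sub_mem (WL_mul ihm ihn) (Nat.add_comm n m ▸ WL_mul ihn ihm)

lemma sigma_WL {k : ℕ} (hk : k ≠ 3) {a : AA g} (ha : a ∈ WL g k) : sigmaA g a = 0 := by
  induction ha using Submodule.span_induction with
  | mem a ha =>
    obtain ⟨w, hw, rfl⟩ := ha
    rw [sigma_single, bfun_len (by rw [hw]; exact hk), smul_zero]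
  | zero => simp
  | add a b ha hb iha ihb => rw [map_add, iha, ihb, add_zero]
  | smul t a ha iha => rw [map_smul, iha, smul_zero]

lemma sigmaL_homog_ne3 {k : ℕ} (hk : k ≠ 3) {x : L g} (hx : x ∈ homog g k) :
    sigmaL g x = 0 := by
  induction hx using Submodule.span_induction with
  | mem a ha => exact sigma_WL hk (phi_isBrkt ha)
  | zero => simp
  | add a b ha hb iha ihb => rw [map_add, iha, ihb, add_zero]
  | smul t a ha iha => rw [map_smul, iha, smul_zero]

def MM (g : ℕ) : Submodule ℤ (L g) := Submodule.span ℤ {x | ∃ k, IsBrkt g k x}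

lemma MM_lie {x y : L g} (hx : x ∈ MM g) (hy : y ∈ MM g) : ⁅x, y⁆ ∈ MM g := by
  induction hx using Submodule.span_induction with
  | mem a ha =>
    induction hy using Submodule.span_induction with
    | mem b hb =>
      obtain ⟨m, hm⟩ := ha
      obtain ⟨n, hn⟩ := hb
      exact Submodule.subset_span ⟨m + n, hm.lie hn⟩
    | zero => simp
    | add b c hb hc ihb ihc => rw [lie_add]; exact add_mem ihb ihc
    | smul t b hb ihb => rw [lie_smul]; exact Submodule.smul_mem _ t ihb
  | zero => simp
  | add a c ha hc iha ihc => rw [add_lie]; exact add_mem iha ihc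
  | smul t a ha iha => rw [smul_lie]; exact Submodule.smul_mem _ t iha

lemma toL_single (i : Fin (2*g)) : toL g (Pi.single i 1) = FreeLieAlgebra.of ℤ i := by
  rw [toL_apply]
  rw [Finset.sum_eq_single i (fun j _ hj => by rw [Pi.single_eq_of_ne hj, zero_smul])
    (fun h => absurd (Finset.mem_univ i) h)]
  rw [Pi.single_eq_same, one_smul]

lemma mem_MM (x : L g) : x ∈ MM g := by
  have hof : ∀ i, FreeLieAlgebra.of ℤ i ∈ MM g := fun i =>
    Submodule.subset_span ⟨1, toL_single i ▸ IsBrkt.of (Pi.single i 1)⟩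
  let S : LieSubalgebra ℤ (L g) := { MM g with lie_mem' := fun ha hb => MM_lie ha hb }
  let f : L g →ₗ⁅ℤ⁆ S := FreeLieAlgebra.lift ℤ fun i => ⟨FreeLieAlgebra.of ℤ i, hof i⟩
  have hcomp : S.incl.comp f = LieHom.id := by
    apply FreeLieAlgebra.hom_ext
    intro i
    exact congrArg Subtype.val (FreeLieAlgebra.lift_of_apply (R := ℤ) (L := S) _ i)
  have : (f x : L g) = x := by
    have := congrArg (fun F : L g →ₗ⁅ℤ⁆ L g => F x) hcomp
    simpa using this
  exact this ▸ (f x).2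

end S6
end

noncomputable section

/-- The map `H → 𝔏`, `h ↦ [ω, h]`. -/
def adOmega (g : ℕ) : H g →ₗ[ℤ] L g :=
  (LieAlgebra.ad ℤ (L g) (omegaL g)).comp (toL g)

noncomputable section
namespace S6

variable {g : ℕ}

lemma adOmega_apply (v : H g) : adOmega g v = ⁅omegaL g, toL g v⁆ := rfl

lemma range_adOmega_le_homog3 (g : ℕ) : LinearMap.range (adOmega g) ≤ homog g 3 := by
  rintro x ⟨v, rfl⟩
  have h : adOmega g v = ⁅omegaL g, toL g v⁆ := adOmega_apply v
  rw [h]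
  have h2 := lie_mem_homog (omegaL_mem g) (toL_mem g v)
  exact h2

def K4 (g : ℕ) : Submodule ℤ (L g) := Submodule.span ℤ {x | ∃ k, 4 ≤ k ∧ IsBrkt g k x}

lemma homog_le_K4 {k : ℕ} (hk : 4 ≤ k) : homog g k ≤ K4 g :=
  Submodule.span_mono fun x hx => ⟨k, hk, hx⟩

def QQ (g : ℕ) : Submodule ℤ (L g) :=
  (Submodule.span ℤ {omegaL g}) ⊔ LinearMap.range (adOmega g) ⊔ K4 g

lemma lie_omega_mem_QQ {m : ℕ} {y : L g} (hy : IsBrkt g m y) : ⁅y, omegaL g⁆ ∈ QQ g := by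
  rcases Nat.lt_or_ge m 2 with hm | hm
  · have hm1 : m = 1 := by have := isBrkt_pos hy; omega
    obtain ⟨v, rfl⟩ := isBrkt_one' hy hm1
    have heq : ⁅toL g v, omegaL g⁆ = -(adOmega g v) := by
      rw [adOmega_apply, ← lie_skew]
    rw [heq]
    exact Submodule.mem_sup_left (Submodule.mem_sup_right (neg_mem ⟨v, rfl⟩))
  · have hmem : ⁅y, omegaL g⁆ ∈ homog g (m + 2) :=
      lie_mem_homog (Submodule.subset_span hy) (omegaL_mem g)
    exact Submodule.mem_sup_right (homog_le_K4 (by omega) hmem)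

lemma QQ_lie (y : L g) : ∀ x ∈ QQ g, ⁅y, x⁆ ∈ QQ g := by
  have hy := mem_MM y
  induction hy using Submodule.span_induction with
  | mem a ha =>
    intro x hx
    obtain ⟨m, hm⟩ := ha
    obtain ⟨u, hu, w, hw, rfl⟩ := Submodule.mem_sup.1 hx
    obtain ⟨s, hs, z, hz, rfl⟩ := Submodule.mem_sup.1 hu
    rw [lie_add, lie_add]
    refine add_mem (add_mem ?_ ?_) ?_
    · obtain ⟨c, rfl⟩ := Submodule.mem_span_singleton.1 hs
      rw [lie_smul]
      exact Submodule.smul_mem _ c (lie_omega_mem_QQ hm)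
    · have h3 : z ∈ homog g 3 := range_adOmega_le_homog3 g hz
      have := lie_mem_homog (Submodule.subset_span hm) h3
      exact Submodule.mem_sup_right
        (homog_le_K4 (by have := isBrkt_pos hm; omega) this)
    · clear hx
      induction hw using Submodule.span_induction with
      | mem b hb =>
        obtain ⟨k, hk, hkb⟩ := hb
        exact Submodule.mem_sup_right (Submodule.subset_span ⟨m + k, by omega, hm.lie hkb⟩)
      | zero => rw [lie_zero]; exact zero_mem _
      | add b c hb hc ihb ihc => rw [lie_add]; exact add_mem ihb ihc
      | smul t b hb ihb => rw [lie_smul]; exact Submodule.smul_mem _ t ihb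
  | zero => intro x hx; rw [zero_lie]; exact zero_mem _
  | add a b ha hb iha ihb => intro x hx; rw [add_lie]; exact add_mem (iha x hx) (ihb x hx)
  | smul t a ha iha => intro x hx; rw [smul_lie]; exact Submodule.smul_mem _ t (iha x hx)

def NN (g : ℕ) : LieIdeal ℤ (L g) :=
  { QQ g with lie_mem := fun {x m} hm => QQ_lie x m hm }

lemma ideal_le_QQ {x : L g} (hx : x ∈ omegaIdeal g) : x ∈ QQ g := by
  have hle : omegaIdeal g ≤ NN g := by
    apply LieSubmodule.lieSpan_le.2
    intro y hy
    rcases Set.mem_singleton_iff.1 hy with rfl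
    exact Submodule.mem_sup_left (Submodule.mem_sup_left (Submodule.mem_span_singleton_self _))
  exact hle hx

lemma sigmaL_K4 {w : L g} (hw : w ∈ K4 g) : sigmaL g w = 0 := by
  induction hw using Submodule.span_induction with
  | mem b hb =>
    obtain ⟨k, hk, hkb⟩ := hb
    exact sigmaL_homog_ne3 (by omega) (Submodule.subset_span hkb)
  | zero => simp
  | add a b ha hb iha ihb => rw [map_add, iha, ihb, add_zero]
  | smul t a ha iha => rw [map_smul, iha, smul_zero]


lemma adOmega_expand (v : H g) :
    adOmega g v = ∑ i : Fin g, ∑ k, v k • ttt (aIdx g i) (bIdx g i) k := by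
  rw [adOmega_apply, omegaL, sum_lie'']
  refine Finset.sum_congr rfl fun i _ => ?_
  rw [show toL g (aV g i) = FreeLieAlgebra.of ℤ (aIdx g i) from toL_single _,
      show toL g (bV g i) = FreeLieAlgebra.of ℤ (bIdx g i) from toL_single _,
      toL_apply, lie_sum'']
  simp only [lie_smul]
  rfl

lemma wrd_eq_iff {a b c a' b' c' : Fin (2*g)} :
    wrd a b c = wrd a' b' c' ↔ a = a' ∧ b = b' ∧ c = c' := by
  constructor
  · intro h
    have h2 : ([a, b, c] : List (Fin (2*g))) = [a', b', c'] := congrArg FreeMonoid.toList h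
    simpa using h2
  · rintro ⟨rfl, rfl, rfl⟩; rfl

lemma aIdx_injEq {i i' : Fin g} : aIdx g i = aIdx g i' ↔ i = i' := by
  simp [aIdx, Fin.ext_iff]

lemma bIdx_injEq {i i' : Fin g} : bIdx g i = bIdx g i' ↔ i = i' := by
  simp [bIdx, Fin.ext_iff]

lemma aIdx_ne_bIdx (i i' : Fin g) : aIdx g i ≠ bIdx g i' := by
  intro h
  have h2 := congrArg Fin.val h
  simp only [aIdx, bIdx] at h2
  have := i.2
  omega

lemma aIdx_eq_bIdx_iff (i i' : Fin g) : aIdx g i = bIdx g i' ↔ False :=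
  iff_false_intro (aIdx_ne_bIdx i i')

lemma bIdx_eq_aIdx_iff (i i' : Fin g) : bIdx g i = aIdx g i' ↔ False :=
  iff_false_intro (Ne.symm (aIdx_ne_bIdx i' i))

lemma phi_sum {ι : Type*} (s : Finset ι) (f : ι → L g) :
    phiL g (∑ i ∈ s, f i) = ∑ i ∈ s, phiL g (f i) := by
  rw [← LieHom.coe_toLinearMap]; exact map_sum _ f s

lemma phi_smul (c : ℤ) (x : L g) : phiL g (c • x) = c • phiL g x :=
  (phiL g).map_smul c x

lemma adOmega_coeff (v : H g) (u : FreeMonoid (Fin (2*g))) :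
    (phiL g (adOmega g v)).coeff u =
      ∑ i : Fin g, ∑ k, v k *
        ((if wrd (aIdx g i) (bIdx g i) k = u then (1:ℤ) else 0)
          - (if wrd (bIdx g i) (aIdx g i) k = u then 1 else 0)
          - (if wrd k (aIdx g i) (bIdx g i) = u then 1 else 0)
          + (if wrd k (bIdx g i) (aIdx g i) = u then 1 else 0)) := by
  have hl : ∀ x : AA g,
      x.coeff u = (Finsupp.lapply u : (FreeMonoid (Fin (2*g)) →₀ ℤ) →ₗ[ℤ] ℤ) x.coeff := fun _ => rfl
  rw [hl, adOmega_expand, phi_sum]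
  simp only [phi_sum, phi_smul, phi_ttt, map_sum, map_sub, map_add, map_smul,
    Finsupp.lapply_apply, Finsupp.single_apply, smul_eq_mul, MonoidAlgebra.coeff_sum,
    MonoidAlgebra.coeff_add, MonoidAlgebra.coeff_sub, MonoidAlgebra.coeff_smul,
    MonoidAlgebra.coeff_single, Finsupp.smul_apply, Finsupp.add_apply, Finsupp.sub_apply,
    Finsupp.finset_sum_apply]

lemma adOmega_ker (hg : 1 ≤ g) {v : H g} (hv : adOmega g v = 0) : v = 0 := by
  have h0 : ∀ u, (phiL g (adOmega g v)).coeff u = 0 := by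
    intro u
    rw [hv, show phiL g 0 = 0 from (phiL g).toLinearMap.map_zero]
    rfl
  set i0 : Fin g := ⟨0, hg⟩ with hi0
  funext j
  show v j = 0
  by_cases hj : j = aIdx g i0
  · subst hj
    have h := h0 (wrd (bIdx g i0) (aIdx g i0) (aIdx g i0))
    rw [adOmega_coeff] at h
    simp only [wrd_eq_iff, aIdx_eq_bIdx_iff, bIdx_eq_aIdx_iff, aIdx_injEq, bIdx_injEq,
      false_and, and_false, if_false, if_true] at h
    rw [Finset.sum_eq_single i0 (fun b _ hb => by simp [hb]) (by simp)] at h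
    simp only [zero_sub, sub_zero, add_zero, mul_neg, mul_ite, mul_one, mul_zero,
      true_and, Finset.sum_neg_distrib, neg_eq_zero, Finset.sum_ite_eq', Finset.mem_univ,
      if_true] at h
    exact h
  · have h := h0 (wrd (aIdx g i0) (bIdx g i0) j)
    rw [adOmega_coeff] at h
    have hj' : aIdx g i0 ≠ j := fun hc => hj hc.symm
    simp only [wrd_eq_iff, aIdx_eq_bIdx_iff, bIdx_eq_aIdx_iff, aIdx_injEq, bIdx_injEq,
      false_and, and_false, if_false, hj', if_true] at h
    rw [Finset.sum_eq_single i0 (fun b _ hb => by simp [hb]) (by simp)] at h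
    simp only [hj', and_false, if_false, sub_zero, add_zero, mul_ite, mul_one, mul_zero,
      true_and, Finset.sum_ite_eq', Finset.mem_univ, if_true] at h
    exact h


lemma part1 (g : ℕ) :
    (omegaIdeal g).toSubmodule ⊓ homog g 3 = LinearMap.range (adOmega g) := by
  apply le_antisymm
  · rintro y ⟨hyI, hy3⟩
    have hyQ : y ∈ QQ g := ideal_le_QQ hyI
    obtain ⟨u, hu, w, hw, rfl⟩ := Submodule.mem_sup.1 hyQ
    obtain ⟨s, hs, z, hz, rfl⟩ := Submodule.mem_sup.1 hu
    have h1 : sigmaL g (s + z + w) = s + z + w := sigmaL_homog3 hy3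
    obtain ⟨c, rfl⟩ := Submodule.mem_span_singleton.1 hs
    rw [map_add, map_add, map_smul, sigmaL_homog_ne3 (by omega) (omegaL_mem g), smul_zero,
      sigmaL_K4 hw, sigmaL_homog3 (range_adOmega_le_homog3 g hz), zero_add, add_zero] at h1
    rw [← h1]
    exact hz
  · rintro y ⟨v, rfl⟩
    refine ⟨?_, range_adOmega_le_homog3 g ⟨v, rfl⟩⟩
    show adOmega g v ∈ omegaIdeal g
    rw [adOmega_apply]
    exact lie_mem_left ℤ (L g) (omegaIdeal g) _ _
      (LieSubmodule.subset_lieSpan (Set.mem_singleton _))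

end S6
end


/-- `⟨⟨ω⟩⟩ ∩ 𝔏₃` is exactly the image `[ω,H]` of the map `h ↦ [ω,h]`,
and this map is injective. -/
theorem stmt6 (g : ℕ) (hg : 1 ≤ g) :
    (omegaIdeal g).toSubmodule ⊓ homog g 3 = LinearMap.range (adOmega g) ∧
    Function.Injective (adOmega g) := by
  refine ⟨S6.part1 g, ?_⟩
  intro v w h
  have hz : adOmega g (v - w) = 0 := by rw [map_sub, h, sub_self]
  have := S6.adOmega_ker hg hz
  exact sub_eq_zero.1 this

end
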